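/- arXiv:2501.12790 — 3 statements merged into one kernel-verified Lean document; each statement's English description precedes it below -/
import Mathlib

section
/- The operator L has no strictly positive eigenvalues: for every λ > 0, the only twice continuously differentiable function ψ ∈ L²(ℝ) satisfying −ψ'' + V·ψ = λ·ψ on ℝ is ψ ≡ 0. -/
open Real MeasureTheory Filter

noncomputable def Qs (x : ℝ) : ℝ := (3/2) * (1 / Real.cosh (x/2))^2
noncomputable def Hs (x : ℝ) : ℝ := Real.tanh (x/2)
noncomputable def alphaFn (x : ℝ) : ℝ := (1/3) * (Real.sinh x + x)
noncomputable def alphaInv : ℝ → ℝ := Function.invFun alphaFn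
noncomputable def Qt (x : ℝ) : ℝ := Qs (alphaInv x)
noncomputable def Ht (x : ℝ) : ℝ := Hs (alphaInv x)
noncomputable def Vpot (x : ℝ) : ℝ := 2 * (Qt x)^2 * (1 - Qt x)

lemma alphaFn_cont : Continuous alphaFn := by
  unfold alphaFn; continuity

lemma alphaFn_surjective : Function.Surjective alphaFn := by
  intro x
  rcases le_total 0 x with h | h
  · have h0 : alphaFn 0 = 0 := by simp [alphaFn]
    have h1 : x ≤ alphaFn (3*x) := by
      have hs : 0 ≤ Real.sinh (3*x) := Real.sinh_nonneg_iff.mpr (by linarith)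
      unfold alphaFn; linarith
    have hsub := intermediate_value_Icc (by linarith : (0:ℝ) ≤ 3*x) alphaFn_cont.continuousOn
    have hx : x ∈ Set.Icc (alphaFn 0) (alphaFn (3*x)) := by
      rw [h0]; exact ⟨h, h1⟩
    obtain ⟨y, _, hy⟩ := hsub hx
    exact ⟨y, hy⟩
  · have h0 : alphaFn 0 = 0 := by simp [alphaFn]
    have h1 : alphaFn (3*x) ≤ x := by
      have hs : Real.sinh (3*x) ≤ 0 := by
        rw [← Real.sinh_zero]; exact Real.sinh_le_sinh.mpr (by linarith)
      unfold alphaFn; linarith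
    have hsub := intermediate_value_Icc (by linarith : 3*x ≤ (0:ℝ)) alphaFn_cont.continuousOn
    have hx : x ∈ Set.Icc (alphaFn (3*x)) (alphaFn 0) := by
      rw [h0]; exact ⟨h1, h⟩
    obtain ⟨y, _, hy⟩ := hsub hx
    exact ⟨y, hy⟩

lemma alphaFn_alphaInv (x : ℝ) : alphaFn (alphaInv x) = x :=
  Function.rightInverse_invFun alphaFn_surjective x

lemma Vpot_bound (x : ℝ) : |Vpot x| ≤ 180 / (9*x^2+4) := by
  set y := alphaInv x with hy
  have hxy : Real.sinh y + y = 3 * x := by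
    have := alphaFn_alphaInv x
    unfold alphaFn at this; linarith
  have hcosh : 3 * |x| ≤ 2 * Real.cosh y := by
    have h1 : |Real.sinh y + y| ≤ |Real.sinh y| + |y| := abs_add_le _ _
    have h2 : |y| ≤ |Real.sinh y| := by
      rw [Real.abs_sinh]; exact Real.self_le_sinh_iff.mpr (abs_nonneg y)
    have h3 : |Real.sinh y| ≤ Real.cosh y := by
      rw [Real.abs_sinh, ← Real.cosh_abs]; exact (Real.sinh_lt_cosh _).le
    have h4 : |Real.sinh y + y| = 3 * |x| := by
      rw [hxy, abs_mul]; norm_num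
    linarith
  have hch2 : 2 * Real.cosh (y/2)^2 = Real.cosh y + 1 := by
    have h1 := Real.cosh_two_mul (y/2)
    have h2 := Real.cosh_sq (y/2)
    have : 2 * (y/2) = y := by ring
    rw [this] at h1
    linarith
  have hcpos : 0 < Real.cosh (y/2)^2 := by positivity
  have hQt : Qt x = (3/2) / Real.cosh (y/2)^2 := by
    unfold Qt Qs
    rw [← hy, div_pow, one_pow]
    ring
  have hQpos : 0 < Qt x := by rw [hQt]; positivity
  have hQle : Qt x ≤ 3/2 := by
    rw [hQt]
    have h1 : (1:ℝ) ≤ Real.cosh (y/2) := Real.one_le_cosh _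
    have : (1:ℝ) ≤ Real.cosh (y/2)^2 := by nlinarith
    rw [div_le_iff₀ hcpos]; nlinarith
  have hQA : Qt x * (3*|x|+2) ≤ 6 := by
    rw [hQt, div_mul_eq_mul_div, div_le_iff₀ hcpos]
    nlinarith
  have hVQ : |Vpot x| ≤ 5 * Qt x^2 := by
    rw [abs_le]; constructor
    · unfold Vpot; nlinarith [sq_nonneg (Qt x)]
    · unfold Vpot; nlinarith [sq_nonneg (Qt x)]
  have hden : 0 < 9*x^2+4 := by positivity
  rw [le_div_iff₀ hden]
  have h6 : 0 ≤ Qt x * (3*|x|+2) := by positivity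
  have h7 : (Qt x * (3*|x|+2))^2 ≤ 36 := by nlinarith
  have h8 : Qt x^2 * (9*x^2+4) ≤ (Qt x*(3*|x|+2))^2 := by
    nlinarith [sq_abs x, abs_nonneg x, sq_nonneg (Qt x), mul_nonneg (abs_nonneg x) (sq_nonneg (Qt x))]
  nlinarith [abs_nonneg (Vpot x)]

set_option maxHeartbeats 1000000 in
/-- The operator `L = -∂ₓ² + V` has no strictly positive eigenvalues. -/
theorem L_no_positive_eigenvalues :
    ∀ lam : ℝ, 0 < lam → ∀ ψ : ℝ → ℝ, ContDiff ℝ 2 ψ →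
      Integrable (fun x => (ψ x)^2) →
      (∀ x : ℝ, -(deriv (deriv ψ) x) + Vpot x * ψ x = lam * ψ x) →
      ∀ x : ℝ, ψ x = 0 := by
  intro lam hlam ψ hψ hInt hEq
  -- regularity
  have hψ' : ContDiff ℝ (1+1 : ℕ) ψ := by exact_mod_cast hψ
  have hd1 : Differentiable ℝ ψ := hψ.differentiable (by norm_num)
  have hcd1 : ContDiff ℝ 1 (deriv ψ) := by
    have := (contDiff_succ_iff_deriv.mp (by exact_mod_cast hψ' : ContDiff ℝ ((1 : WithTop ℕ∞) + 1) ψ)).2.2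
    exact this
  have hd2 : Differentiable ℝ (deriv ψ) := hcd1.differentiable one_ne_zero
  have hc2 : Continuous (deriv (deriv ψ)) := hcd1.continuous_deriv le_rfl
  have hcu : Continuous ψ := hd1.continuous
  have hcu' : Continuous (deriv ψ) := hd2.continuous
  have hu : ∀ x, HasDerivAt ψ (deriv ψ x) x := fun x => (hd1 x).hasDerivAt
  have hu' : ∀ x, HasDerivAt (deriv ψ) (deriv (deriv ψ) x) x := fun x => (hd2 x).hasDerivAt
  have hode : ∀ x, deriv (deriv ψ) x = (Vpot x - lam) * ψ x := by
    intro x; have := hEq x; ring_nf; ring_nf at this; linarith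
  -- constants
  set s : ℝ := Real.sqrt lam with hs_def
  have hs : 0 < s := Real.sqrt_pos.mpr hlam
  have hs2 : s^2 = lam := Real.sq_sqrt hlam.le
  -- energy
  set W : ℝ → ℝ := fun x => (deriv ψ x)^2 + lam * (ψ x)^2 with hW_def
  have hWnn : ∀ x, 0 ≤ W x := fun x => by positivity
  have hW : ∀ x, HasDerivAt W (2 * Vpot x * ψ x * deriv ψ x) x := by
    intro x
    have h1 := ((hu' x).pow 2).add (((hu x).pow 2).const_mul lam)
    refine h1.congr_deriv ?_
    rw [hode x]; ring
  set P : ℝ → ℝ := fun x => (30 / s) * Real.arctan (3 * x / 2) with hP_def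
  have hP : ∀ x, HasDerivAt P (180 / (s * (9*x^2+4))) x := by
    intro x
    have hin : HasDerivAt (fun x : ℝ => 3 * x / 2) (3/2) x := by
      simpa using ((hasDerivAt_id x).const_mul (3:ℝ)).div_const 2
    have h1 := (Real.hasDerivAt_arctan (3*x/2)).comp x hin
    have h2 := h1.const_mul (30 / s)
    refine (h2.congr_deriv ?_)
    symm
    have heq : (1 + (3*x/2)^2) = (9*x^2+4)/4 := by ring
    have hdz : (9*x^2+4 : ℝ) ≠ 0 := by positivity
    rw [heq]
    field_simp
    ring
  -- key pointwise bound |W'| ≤ P' * W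
  have hkey : ∀ x, |2 * Vpot x * ψ x * deriv ψ x| ≤ (180 / (s * (9*x^2+4))) * W x := by
    intro x
    have hden : (0:ℝ) < 9*x^2+4 := by positivity
    have hVb := Vpot_bound x
    have h1 : |2 * Vpot x * ψ x * deriv ψ x| = |Vpot x| * (2 * (|ψ x| * |deriv ψ x|)) := by
      rw [abs_mul, abs_mul, abs_mul]
      rw [abs_of_nonneg (by norm_num : (0:ℝ) ≤ 2)]
      ring
    have h2 : 2 * (|ψ x| * |deriv ψ x|) ≤ W x / s := by
      rw [le_div_iff₀ hs]
      show 2 * (|ψ x| * |deriv ψ x|) * s ≤ deriv ψ x ^ 2 + lam * ψ x ^ 2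
      nlinarith [sq_nonneg (|deriv ψ x| - s * |ψ x|), sq_abs (ψ x), sq_abs (deriv ψ x),
        abs_nonneg (ψ x), abs_nonneg (deriv ψ x)]
    have h3 : 0 ≤ 2 * (|ψ x| * |deriv ψ x|) := by positivity
    calc |2 * Vpot x * ψ x * deriv ψ x|
        = |Vpot x| * (2 * (|ψ x| * |deriv ψ x|)) := h1
      _ ≤ (180 / (9*x^2+4)) * (W x / s) := by
          apply mul_le_mul hVb h2 h3 (by positivity)
      _ = (180 / (s * (9*x^2+4))) * W x := by
          rw [div_mul_div_comm, mul_comm (9*x^2+4) s, div_mul_eq_mul_div, mul_comm (180:ℝ) (W x), mul_div_assoc]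
  -- monotone quantities
  set f₁ : ℝ → ℝ := fun x => W x * Real.exp (-P x) with hf1_def
  set f₂ : ℝ → ℝ := fun x => W x * Real.exp (P x) with hf2_def
  have hf1 : ∀ x, HasDerivAt f₁ ((2 * Vpot x * ψ x * deriv ψ x
      - (180 / (s * (9*x^2+4))) * W x) * Real.exp (-P x)) x := by
    intro x
    have h := (hW x).mul ((hP x).neg.exp)
    refine h.congr_deriv ?_; simp only [Pi.neg_apply]; ring
  have hf2 : ∀ x, HasDerivAt f₂ ((2 * Vpot x * ψ x * deriv ψ x
      + (180 / (s * (9*x^2+4))) * W x) * Real.exp (P x)) x := by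
    intro x
    have h := (hW x).mul ((hP x).exp)
    refine h.congr_deriv ?_; ring
  have hf1anti : Antitone f₁ := by
    apply antitone_of_deriv_nonpos (fun x => (hf1 x).differentiableAt)
    intro x
    rw [(hf1 x).deriv]
    apply mul_nonpos_of_nonpos_of_nonneg _ (Real.exp_nonneg _)
    have := hkey x
    have := le_abs_self (2 * Vpot x * ψ x * deriv ψ x)
    linarith
  have hf2mono : Monotone f₂ := by
    apply monotone_of_deriv_nonneg (fun x => (hf2 x).differentiableAt)
    intro x
    rw [(hf2 x).deriv]
    apply mul_nonneg _ (Real.exp_nonneg _)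
    have := hkey x
    have := neg_abs_le (2 * Vpot x * ψ x * deriv ψ x)
    linarith
  have hP0 : P 0 = 0 := by simp [hP_def]
  -- integration machinery
  have hIcont : Continuous (fun x => (deriv ψ x)^2 + ψ x * deriv (deriv ψ) x) :=
    (hcu'.pow 2).add (hcu.mul hc2)
  have hgFTC : ∀ a b : ℝ, ∫ x in a..b, ((deriv ψ x)^2 + ψ x * deriv (deriv ψ) x)
      = ψ b * deriv ψ b - ψ a * deriv ψ a := by
    intro a b
    apply intervalIntegral.integral_eq_sub_of_hasDerivAt
    · intro x _
      have h := (hu x).mul (hu' x)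
      refine h.congr_deriv ?_; ring
    · exact hIcont.intervalIntegrable a b
  have hqFTC : ∀ a b : ℝ, ∫ x in a..b, 2 * (ψ x * deriv ψ x) = (ψ b)^2 - (ψ a)^2 := by
    intro a b
    apply intervalIntegral.integral_eq_sub_of_hasDerivAt
    · intro x _
      have h := (hu x).pow 2
      refine h.congr_deriv ?_; ring
    · exact (continuous_const.mul (hcu.mul hcu')).intervalIntegrable a b
  set I : ℝ := ∫ x, (ψ x)^2 with hI_def
  have hI0 : 0 ≤ I := integral_nonneg (fun x => sq_nonneg _)
  have hIab : ∀ a b : ℝ, a ≤ b → (∫ x in a..b, (ψ x)^2) ≤ I := by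
    intro a b hab
    rw [intervalIntegral.integral_of_le hab]
    exact setIntegral_le_integral hInt (Eventually.of_forall (fun x => sq_nonneg _))
  set M : ℝ := lam + 45 with hM_def
  have hMpos : 0 < M := by simp only [hM_def]; linarith
  have hV45 : ∀ x, |Vpot x| ≤ 45 := by
    intro x
    refine le_trans (Vpot_bound x) ?_
    rw [div_le_iff₀ (by positivity : (0:ℝ) < 9*x^2+4)]
    nlinarith [sq_nonneg x]
  have huu'' : ∀ x, -(M * (ψ x)^2) ≤ ψ x * deriv (deriv ψ) x := by
    intro x
    rw [hode x]
    have h := abs_le.mp (hV45 x)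
    nlinarith [sq_nonneg (ψ x)]
  have hA : ∀ a b : ℝ, a ≤ b → (∫ x in a..b, (deriv ψ x)^2)
      ≤ ψ b * deriv ψ b - ψ a * deriv ψ a + M * I := by
    intro a b hab
    have hsplit : (∫ x in a..b, ((deriv ψ x)^2 + ψ x * deriv (deriv ψ) x))
        = (∫ x in a..b, (deriv ψ x)^2) + ∫ x in a..b, ψ x * deriv (deriv ψ) x :=
      intervalIntegral.integral_add ((hcu'.pow 2).intervalIntegrable a b)
        ((hcu.mul hc2).intervalIntegrable a b)
    have hlow : -(M * I) ≤ ∫ x in a..b, ψ x * deriv (deriv ψ) x := by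
      have h1 : (∫ x in a..b, -(M * (ψ x)^2)) ≤ ∫ x in a..b, ψ x * deriv (deriv ψ) x := by
        apply intervalIntegral.integral_mono_on hab
          ((continuous_const.mul (hcu.pow 2)).neg.intervalIntegrable a b)
          ((hcu.mul hc2).intervalIntegrable a b)
        exact fun x _ => huu'' x
      have h2 : (∫ x in a..b, -(M * (ψ x)^2)) = -(M * ∫ x in a..b, (ψ x)^2) := by
        rw [intervalIntegral.integral_neg, intervalIntegral.integral_const_mul]
      have h3 := hIab a b hab
      rw [h2] at h1
      nlinarith
    have := hgFTC a b
    linarith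
  -- no eventual largeness of ψ²
  have hbigIci : ∀ c : ℝ, ¬ (∀ x, c ≤ x → 2 ≤ (ψ x)^2) := by
    intro c hc
    have hconst : Integrable (fun _ : ℝ => (2:ℝ)) (volume.restrict (Set.Ici c)) := by
      refine Integrable.mono' (hInt.restrict) aestronglyMeasurable_const ?_
      rw [ae_restrict_iff' measurableSet_Ici]
      filter_upwards with t ht
      rw [Real.norm_eq_abs, abs_of_nonneg (by norm_num : (0:ℝ) ≤ 2)]
      exact hc t ht
    rw [integrable_const_iff] at hconst
    rcases hconst with h | h
    · norm_num at h
    · rw [isFiniteMeasure_restrict, Real.volume_Ici] at h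
      exact h rfl
  have hbigIic : ∀ c : ℝ, ¬ (∀ x, x ≤ c → 2 ≤ (ψ x)^2) := by
    intro c hc
    have hconst : Integrable (fun _ : ℝ => (2:ℝ)) (volume.restrict (Set.Iic c)) := by
      refine Integrable.mono' (hInt.restrict) aestronglyMeasurable_const ?_
      rw [ae_restrict_iff' measurableSet_Iic]
      filter_upwards with t ht
      rw [Real.norm_eq_abs, abs_of_nonneg (by norm_num : (0:ℝ) ≤ 2)]
      exact hc t ht
    rw [integrable_const_iff] at hconst
    rcases hconst with h | h
    · norm_num at h
    · rw [isFiniteMeasure_restrict, Real.volume_Iic] at h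
      exact h rfl
  -- far out points with small ψ·ψ'
  have hR : ∀ b₀ : ℝ, ∃ b, b₀ ≤ b ∧ ψ b * deriv ψ b ≤ 1 := by
    intro b₀
    by_contra hcon
    push_neg at hcon
    apply hbigIci (b₀ + 1)
    intro x hx
    have hx0 : b₀ ≤ x := by linarith
    have hftc := hqFTC b₀ x
    have hmono : (2:ℝ) * (x - b₀) ≤ ∫ t in b₀..x, 2 * (ψ t * deriv ψ t) := by
      have h := intervalIntegral.integral_mono_on hx0 (intervalIntegrable_const (μ := volume))
        ((continuous_const.mul (hcu.mul hcu')).intervalIntegrable b₀ x)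
        (fun t ht => by have := hcon t ht.1; linarith : ∀ t ∈ Set.Icc b₀ x, (2:ℝ) ≤ 2 * (ψ t * deriv ψ t))
      rw [intervalIntegral.integral_const, smul_eq_mul] at h
      simp only [Pi.mul_apply] at h
      linarith
    nlinarith [sq_nonneg (ψ b₀)]
  have hL : ∀ a₀ : ℝ, ∃ a, a ≤ a₀ ∧ -1 ≤ ψ a * deriv ψ a := by
    intro a₀
    by_contra hcon
    push_neg at hcon
    apply hbigIic (a₀ - 1)
    intro x hx
    have hx0 : x ≤ a₀ := by linarith
    have hftc := hqFTC x a₀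
    have hmono : (∫ t in x..a₀, 2 * (ψ t * deriv ψ t)) ≤ (-2:ℝ) * (a₀ - x) := by
      have h := intervalIntegral.integral_mono_on hx0
        ((continuous_const.mul (hcu.mul hcu')).intervalIntegrable x a₀)
        (intervalIntegrable_const (μ := volume))
        (fun t ht => by have := hcon t ht.2; linarith : ∀ t ∈ Set.Icc x a₀, 2 * (ψ t * deriv ψ t) ≤ (-2:ℝ))
      rw [intervalIntegral.integral_const, smul_eq_mul] at h
      simp only [Pi.mul_apply] at h
      linarith
    nlinarith [sq_nonneg (ψ a₀)]
  -- W 0 = 0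
  have hWcont : Continuous W := (hcu'.pow 2).add (continuous_const.mul (hcu.pow 2))
  have hW0 : W 0 ≤ 0 := by
    by_contra hpos
    push_neg at hpos
    set B : ℝ := (30 / s) * (Real.pi / 2) with hB_def
    have hPB : ∀ x, |P x| ≤ B := by
      intro x
      have h1 := Real.arctan_lt_pi_div_two (3*x/2)
      have h2 := Real.neg_pi_div_two_lt_arctan (3*x/2)
      have h3 : |Real.arctan (3*x/2)| ≤ Real.pi/2 := abs_le.mpr ⟨by linarith, by linarith⟩
      have h4 : |P x| = (30/s) * |Real.arctan (3*x/2)| := by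
        rw [hP_def]
        rw [abs_mul, abs_of_nonneg (by positivity : (0:ℝ) ≤ 30/s)]
      rw [h4, hB_def]
      exact mul_le_mul_of_nonneg_left h3 (by positivity)
    set ε : ℝ := W 0 * Real.exp (-B) with hε_def
    have hεpos : 0 < ε := mul_pos hpos (Real.exp_pos _)
    have hlow : ∀ x, ε ≤ W x := by
      intro x
      have hεB : ε * Real.exp B ≤ W 0 := by
        rw [hε_def, mul_assoc, ← Real.exp_add]
        simp
      rcases le_total 0 x with hx | hx
      · have hmono := hf2mono hx
        have h0 : f₂ 0 = W 0 := by simp [hf2_def, hP0]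
        have h1 : W 0 ≤ W x * Real.exp (P x) := by
          rw [← h0]; simpa [hf2_def] using hmono
        have h2 : Real.exp (P x) ≤ Real.exp B := Real.exp_le_exp.mpr ((abs_le.mp (hPB x)).2)
        have h3 : W x * Real.exp (P x) ≤ W x * Real.exp B := by
          exact mul_le_mul_of_nonneg_left h2 (hWnn x)
        have h4 : ε * Real.exp B ≤ W x * Real.exp B := by linarith
        exact le_of_mul_le_mul_right h4 (Real.exp_pos B)
      · have hmono := hf1anti hx
        have h0 : f₁ 0 = W 0 := by simp [hf1_def, hP0]
        have h1 : W 0 ≤ W x * Real.exp (-P x) := by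
          rw [← h0]; simpa [hf1_def] using hmono
        have h2 : Real.exp (-P x) ≤ Real.exp B := by
          apply Real.exp_le_exp.mpr
          have := (abs_le.mp (hPB x)).1; linarith
        have h3 : W x * Real.exp (-P x) ≤ W x * Real.exp B := by
          exact mul_le_mul_of_nonneg_left h2 (hWnn x)
        have h4 : ε * Real.exp B ≤ W x * Real.exp B := by linarith
        exact le_of_mul_le_mul_right h4 (Real.exp_pos B)
    set C : ℝ := 2 + M * I + lam * I with hC_def
    have hCpos : 0 < C + 1 := by
      have h1 : 0 ≤ M * I := mul_nonneg hMpos.le hI0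
      have h2 : 0 ≤ lam * I := mul_nonneg hlam.le hI0
      simp only [hC_def]; linarith
    set T : ℝ := (C + 1) / (2 * ε) with hT_def
    have hTpos : 0 < T := div_pos hCpos (by positivity)
    obtain ⟨b, hb1, hb2⟩ := hR T
    obtain ⟨a, ha1, ha2⟩ := hL (-T)
    have hTT : -T ≤ T := by linarith
    have hab : a ≤ b := by linarith
    -- ∫ over [-T,T] of ψ'^2 bounded by ∫ over [a,b]
    have hadd1 : (∫ x in a..(-T), (deriv ψ x)^2) + (∫ x in (-T)..b, (deriv ψ x)^2)
        = ∫ x in a..b, (deriv ψ x)^2 :=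
      intervalIntegral.integral_add_adjacent_intervals
        ((hcu'.pow 2).intervalIntegrable _ _) ((hcu'.pow 2).intervalIntegrable _ _)
    have hadd2 : (∫ x in (-T)..T, (deriv ψ x)^2) + (∫ x in T..b, (deriv ψ x)^2)
        = ∫ x in (-T)..b, (deriv ψ x)^2 :=
      intervalIntegral.integral_add_adjacent_intervals
        ((hcu'.pow 2).intervalIntegrable _ _) ((hcu'.pow 2).intervalIntegrable _ _)
    have hnn1 : 0 ≤ ∫ x in a..(-T), (deriv ψ x)^2 :=
      intervalIntegral.integral_nonneg ha1 (fun t _ => sq_nonneg _)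
    have hnn2 : 0 ≤ ∫ x in T..b, (deriv ψ x)^2 :=
      intervalIntegral.integral_nonneg hb1 (fun t _ => sq_nonneg _)
    have h5 : (∫ x in (-T)..T, (deriv ψ x)^2) ≤ ∫ x in a..b, (deriv ψ x)^2 := by
      linarith
    have h6 : (∫ x in (-T)..T, (deriv ψ x)^2) ≤ 2 + M * I := by
      have := hA a b hab
      linarith
    -- ∫ of W over [-T,T]
    have h7 : (∫ x in (-T)..T, W x)
        = (∫ x in (-T)..T, (deriv ψ x)^2) + lam * ∫ x in (-T)..T, (ψ x)^2 := by
      rw [hW_def]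
      beta_reduce
      rw [intervalIntegral.integral_add (f := fun x => deriv ψ x ^ 2) ((hcu'.pow 2).intervalIntegrable _ _) (g := fun x => lam * ψ x ^ 2)
        ((continuous_const.mul (hcu.pow 2)).intervalIntegrable _ _)]
      rw [intervalIntegral.integral_const_mul]
    have h8 : ε * (2 * T) ≤ ∫ x in (-T)..T, W x := by
      have h := intervalIntegral.integral_mono_on hTT (intervalIntegrable_const (μ := volume))
        (hWcont.intervalIntegrable _ _) (fun t _ => hlow t)
      rw [intervalIntegral.integral_const, smul_eq_mul] at h
      linarith
    have h9 := hIab (-T) T hTT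
    have h10 : ε * (2 * T) ≤ C := by
      have h11 : lam * (∫ x in (-T)..T, (ψ x)^2) ≤ lam * I :=
        mul_le_mul_of_nonneg_left h9 hlam.le
      simp only [hC_def]
      linarith
    have h12 : ε * (2 * T) = C + 1 := by
      rw [hT_def]
      field_simp
    linarith
  -- conclude ψ ≡ 0
  intro x
  have hWx : W x ≤ 0 := by
    rcases le_total 0 x with hx | hx
    · have hmono := hf1anti hx
      have h0 : f₁ 0 = W 0 := by simp [hf1_def, hP0]
      have h1 : W x * Real.exp (-P x) ≤ 0 := by
        have : f₁ x ≤ W 0 := h0 ▸ hmono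
        calc W x * Real.exp (-P x) = f₁ x := by simp [hf1_def]
          _ ≤ W 0 := this
          _ ≤ 0 := hW0
      nlinarith [Real.exp_pos (-P x), hWnn x]
    · have hmono := hf2mono hx
      have h0 : f₂ 0 = W 0 := by simp [hf2_def, hP0]
      have h1 : W x * Real.exp (P x) ≤ 0 := by
        have : f₂ x ≤ W 0 := h0 ▸ hmono
        calc W x * Real.exp (P x) = f₂ x := by simp [hf2_def]
          _ ≤ W 0 := this
          _ ≤ 0 := hW0
      nlinarith [Real.exp_pos (P x), hWnn x]
  have hsq : (ψ x)^2 = 0 := by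
    have h1 : lam * (ψ x)^2 ≤ W x := by
      simp only [hW_def]
      nlinarith [sq_nonneg (deriv ψ x)]
    nlinarith [sq_nonneg (ψ x)]
  exact pow_eq_zero_iff (two_ne_zero) |>.mp hsq
end

section
/- Suppose φ₀ : ℝ → ℝ is twice continuously differentiable, positive, even, with φ₀ and φ₀' in L²(ℝ), and satisfies −φ₀'' + V·φ₀ = −μ₀²·φ₀ on ℝ for some μ₀ > 0. Then there exists a constant C > 0 such that |φ₀(x)| ≤ C·exp(−(√2/2)·μ₀·|x|), |φ₀'(x)| ≤ C·exp(−(√2/2)·μ₀·|x|), and |φ₀''(x)| ≤ C·exp(−(√2/2)·μ₀·|x|) for all x ∈ ℝ. -/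
open Real MeasureTheory Filter

lemma alphaFn_strictMono : StrictMono alphaFn := by
  have h : StrictMono (fun x => Real.sinh x + x) :=
    Real.sinh_strictMono.add strictMono_id
  intro a b hab
  have h2 := h hab
  simp only at h2
  simp only [alphaFn]
  nlinarith [h2]

lemma alphaFn_tendsto_atTop : Tendsto alphaFn atTop atTop := by
  refine tendsto_atTop_mono' atTop ?_ (tendsto_id.atTop_div_const (by norm_num : (0:ℝ) < 3))
  filter_upwards [eventually_ge_atTop (0:ℝ)] with x hx
  have : 0 ≤ Real.sinh x := by
    rw [← Real.sinh_zero]; exact Real.sinh_le_sinh.mpr hx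
  simp only [alphaFn, id]; linarith

lemma alphaFn_neg (x : ℝ) : alphaFn (-x) = -alphaFn x := by
  simp [alphaFn, Real.sinh_neg]; ring

lemma alphaFn_tendsto_atBot : Tendsto alphaFn atBot atBot := by
  refine tendsto_atBot_mono' atBot ?_ (tendsto_id.atBot_div_const (by norm_num : (0:ℝ) < 3))
  filter_upwards [eventually_le_atBot (0:ℝ)] with x hx
  have : Real.sinh x ≤ 0 := by
    rw [← Real.sinh_zero]; exact Real.sinh_le_sinh.mpr hx
  simp only [alphaFn, id]; linarith

lemma alphaInv_alphaFn (x : ℝ) : alphaInv (alphaFn x) = x :=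
  Function.leftInverse_invFun alphaFn_strictMono.injective x

lemma alphaInv_neg (x : ℝ) : alphaInv (-x) = -alphaInv x := by
  apply alphaFn_strictMono.injective
  rw [alphaFn_alphaInv, alphaFn_neg, alphaFn_alphaInv]

lemma alphaInv_strictMono : StrictMono alphaInv := by
  intro a b hab
  rw [← alphaFn_strictMono.lt_iff_lt, alphaFn_alphaInv, alphaFn_alphaInv]
  exact hab

lemma alphaInv_tendsto_atTop : Tendsto alphaInv atTop atTop := by
  apply alphaInv_strictMono.monotone.tendsto_atTop_atTop
  intro b
  exact ⟨alphaFn b, by rw [alphaInv_alphaFn]⟩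

lemma cosh_tendsto_atTop : Tendsto Real.cosh atTop atTop := by
  refine tendsto_atTop_mono' atTop ?_ (Real.tendsto_exp_atTop.atTop_div_const (by norm_num : (0:ℝ) < 2))
  filter_upwards with x
  have := Real.exp_pos (-x)
  rw [Real.cosh_eq]; linarith

lemma Qs_pos (x : ℝ) : 0 < Qs x := by
  have h := Real.cosh_pos (x/2)
  simp only [Qs]
  positivity

lemma Qs_le (x : ℝ) : Qs x ≤ 3/2 := by
  have h := Real.one_le_cosh (x/2)
  have h2 : (1 / Real.cosh (x/2))^2 ≤ 1 := by
    rw [div_pow, one_pow]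
    apply div_le_one_of_le₀
    · nlinarith
    · positivity
  simp only [Qs]; nlinarith

lemma Qt_pos (x : ℝ) : 0 < Qt x := Qs_pos _
lemma Qt_le (x : ℝ) : Qt x ≤ 3/2 := Qs_le _

lemma Vpot_abs_le (x : ℝ) : |Vpot x| ≤ 9/2 := by
  have h1 := Qt_pos x
  have h2 := Qt_le x
  rw [Vpot, abs_le]
  constructor <;> nlinarith

lemma Vpot_even (x : ℝ) : Vpot (-x) = Vpot x := by
  have : Qt (-x) = Qt x := by
    simp only [Qt, alphaInv_neg, Qs]
    rw [show -alphaInv x / 2 = -(alphaInv x / 2) by ring, Real.cosh_neg]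
  simp [Vpot, this]

lemma Qt_tendsto : Tendsto Qt atTop (nhds 0) := by
  have h1 : Tendsto (fun x => alphaInv x / 2) atTop atTop :=
    alphaInv_tendsto_atTop.atTop_div_const (by norm_num)
  have h2 : Tendsto (fun x => 1 / Real.cosh (alphaInv x / 2)) atTop (nhds 0) := by
    simp only [one_div]
    exact (tendsto_inv_atTop_zero).comp (cosh_tendsto_atTop.comp h1)
  have h3 : Tendsto Qt atTop (nhds ((3/2) * 0^2)) := by
    exact (h2.pow 2).const_mul (3/2)
  simpa using h3

lemma Vpot_tendsto : Tendsto Vpot atTop (nhds 0) := by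
  have h := Qt_tendsto
  have : Tendsto Vpot atTop (nhds (2 * 0^2 * (1 - 0))) :=
    ((h.pow 2).const_mul 2).mul (tendsto_const_nhds.sub h)
  simpa using this

lemma not_integrable_aux (f : ℝ → ℝ) (hf : Integrable f) (a c : ℝ) (hc : 0 < c)
    (h : ∀ x ≥ a, c ≤ f x) : False := by
  have h1 : IntegrableOn (fun _ => c) (Set.Ici a) := by
    apply (hf.integrableOn (s := Set.Ici a)).mono' aestronglyMeasurable_const
    rw [ae_restrict_iff' measurableSet_Ici]
    filter_upwards with x hx
    rw [Real.norm_eq_abs, abs_of_pos hc]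
    exact h x hx
  rw [integrableOn_const_iff] at h1
  rcases h1 with h1 | h1
  · rw [enorm_eq_zero] at h1; linarith
  · rw [Real.volume_Ici] at h1; exact absurd h1 (lt_irrefl _)

lemma weight_hasDeriv (c : ℝ) (f f' : ℝ → ℝ) (hf : ∀ x, HasDerivAt f (f' x) x) (x : ℝ) :
    HasDerivAt (fun y => Real.exp (c*y) * f y) (Real.exp (c*x) * (f' x + c * f x)) x := by
  have h1 : HasDerivAt (fun y => Real.exp (c*y)) (Real.exp (c*x) * c) x := by
    have := (HasDerivAt.const_mul c (hasDerivAt_id x)).exp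
    simpa using this
  have h2 : HasDerivAt (fun y => Real.exp (c*y) * f y)
      (Real.exp (c*x) * c * f x + Real.exp (c*x) * f' x) x := h1.mul (hf x)
  convert h2 using 1
  ring

lemma expWeight_monotoneOn (c R : ℝ) (f f' : ℝ → ℝ) (hf : ∀ x, HasDerivAt f (f' x) x)
    (h : ∀ x ≥ R, 0 ≤ f' x + c * f x) :
    MonotoneOn (fun y => Real.exp (c*y) * f y) (Set.Ici R) := by
  have hW := weight_hasDeriv c f f' hf
  have hd : Differentiable ℝ (fun y => Real.exp (c*y) * f y) := fun x => (hW x).differentiableAt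
  apply monotoneOn_of_deriv_nonneg (convex_Ici R) hd.continuous.continuousOn
    hd.differentiableOn
  intro x hx
  rw [interior_Ici] at hx
  rw [(hW x).deriv]
  exact mul_nonneg (Real.exp_pos _).le (h x hx.le)

lemma expWeight_antitoneOn (c R : ℝ) (f f' : ℝ → ℝ) (hf : ∀ x, HasDerivAt f (f' x) x)
    (h : ∀ x ≥ R, f' x + c * f x ≤ 0) :
    AntitoneOn (fun y => Real.exp (c*y) * f y) (Set.Ici R) := by
  have hW := weight_hasDeriv c f f' hf
  have hd : Differentiable ℝ (fun y => Real.exp (c*y) * f y) := fun x => (hW x).differentiableAt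
  apply antitoneOn_of_deriv_nonpos (convex_Ici R) hd.continuous.continuousOn
    hd.differentiableOn
  intro x hx
  rw [interior_Ici] at hx
  rw [(hW x).deriv]
  exact mul_nonpos_of_nonneg_of_nonpos (Real.exp_pos _).le (h x hx.le)

/-- Exponential decay of the ground state `φ₀` and of its first
two derivatives. -/
theorem ground_state_exponential_decay (φ₀ : ℝ → ℝ) (μ₀ : ℝ) (hμ : 0 < μ₀)
    (hC2 : ContDiff ℝ 2 φ₀) (hpos : ∀ x : ℝ, 0 < φ₀ x)
    (heven : ∀ x : ℝ, φ₀ (-x) = φ₀ x)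
    (hL2 : Integrable (fun x => (φ₀ x)^2))
    (hL2' : Integrable (fun x => (deriv φ₀ x)^2))
    (heq : ∀ x : ℝ, -(deriv (deriv φ₀) x) + Vpot x * φ₀ x = -μ₀^2 * φ₀ x) :
    ∃ C > (0:ℝ), ∀ x : ℝ,
      |φ₀ x| ≤ C * Real.exp (-(Real.sqrt 2 / 2) * μ₀ * |x|) ∧
      |deriv φ₀ x| ≤ C * Real.exp (-(Real.sqrt 2 / 2) * μ₀ * |x|) ∧
      |deriv (deriv φ₀) x| ≤ C * Real.exp (-(Real.sqrt 2 / 2) * μ₀ * |x|) := by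
  set ν : ℝ := Real.sqrt 2 / 2 * μ₀ with hνdef
  have hν : 0 < ν := by
    have h2 : (0:ℝ) < Real.sqrt 2 := Real.sqrt_pos.mpr (by norm_num)
    positivity
  have hν2 : ν^2 = μ₀^2/2 := by
    rw [hνdef, mul_pow, div_pow, Real.sq_sqrt (by norm_num : (0:ℝ) ≤ 2)]; ring
  -- regularity
  have hd1 : Differentiable ℝ φ₀ := hC2.differentiable two_ne_zero
  have h2' : ContDiff ℝ ((1:WithTop ℕ∞)+1) φ₀ := hC2.of_le (by norm_num)
  have hC1d := (contDiff_succ_iff_deriv.mp h2').2.2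
  have hd2 : Differentiable ℝ (deriv φ₀) := hC1d.differentiable one_ne_zero
  have hcont2 : Continuous (deriv (deriv φ₀)) := hC1d.continuous_deriv le_rfl
  have hu : ∀ x, HasDerivAt φ₀ (deriv φ₀ x) x := fun x => (hd1 x).hasDerivAt
  have hu' : ∀ x, HasDerivAt (deriv φ₀) (deriv (deriv φ₀) x) x := fun x => (hd2 x).hasDerivAt
  have heq' : ∀ x, deriv (deriv φ₀) x = (Vpot x + μ₀^2) * φ₀ x := by
    intro x; linear_combination -(heq x)
  have hodd : ∀ x, deriv φ₀ (-x) = -(deriv φ₀ x) := by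
    intro x
    have h1 : deriv (fun y => φ₀ (-y)) x = -deriv φ₀ (-x) := deriv_comp_neg φ₀ x
    have h2 : (fun y => φ₀ (-y)) = φ₀ := funext heven
    rw [h2] at h1
    linarith
  have heven2 : ∀ x, deriv (deriv φ₀) (-x) = deriv (deriv φ₀) x := by
    intro x; rw [heq', heq', Vpot_even, heven]
  -- choose R with Vpot ≥ -μ₀²/2 on [R,∞)
  have hev : ∀ᶠ x in atTop, -(μ₀^2)/2 < Vpot x :=
    Vpot_tendsto.eventually (eventually_gt_nhds (by nlinarith [pow_pos hμ 2]))
  obtain ⟨R₀, hR₀⟩ := eventually_atTop.mp hev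
  set R : ℝ := max R₀ 1 with hRdef
  have hR1 : (1:ℝ) ≤ R := le_max_right _ _
  have hRpos : 0 < R := lt_of_lt_of_le one_pos hR1
  have hVR : ∀ x ≥ R, -(μ₀^2)/2 ≤ Vpot x :=
    fun x hx => (hR₀ x (le_trans (le_max_left _ _) hx)).le
  -- key differential inequality
  have hkey : ∀ x ≥ R, 0 ≤ deriv (deriv φ₀) x - ν^2 * φ₀ x := by
    intro x hx
    have expand : deriv (deriv φ₀) x - ν^2 * φ₀ x = (Vpot x + μ₀^2/2) * φ₀ x := by
      rw [heq', hν2]; ring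
    rw [expand]
    exact mul_nonneg (by linarith [hVR x hx]) (hpos x).le
  -- Step 1: u' ≤ 0 on [R,∞)
  have hmono' : MonotoneOn (deriv φ₀) (Set.Ici R) := by
    apply monotoneOn_of_deriv_nonneg (convex_Ici R) hd2.continuous.continuousOn
      hd2.differentiableOn
    intro x hx
    rw [interior_Ici] at hx
    have h1 := hkey x hx.le
    have h2 : 0 ≤ ν^2 * φ₀ x := mul_nonneg (sq_nonneg ν) (hpos x).le
    linarith
  have hup : ∀ x ≥ R, deriv φ₀ x ≤ 0 := by
    by_contra hcon
    push_neg at hcon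
    obtain ⟨x₀, hx₀R, hx₀⟩ := hcon
    have hmonu : MonotoneOn φ₀ (Set.Ici x₀) := by
      apply monotoneOn_of_deriv_nonneg (convex_Ici x₀) hd1.continuous.continuousOn
        hd1.differentiableOn
      intro y hy
      rw [interior_Ici] at hy
      have := hmono' (Set.mem_Ici.mpr hx₀R)
        (Set.mem_Ici.mpr (le_trans hx₀R hy.le)) hy.le
      linarith
    apply not_integrable_aux _ hL2 x₀ ((φ₀ x₀)^2) (by have := hpos x₀; positivity)
    intro x hx
    have h1 := hmonu (Set.mem_Ici.mpr le_rfl) (Set.mem_Ici.mpr hx) hx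
    have h2 := hpos x₀
    nlinarith
  -- u antitone on [R,∞)
  have hanti : AntitoneOn φ₀ (Set.Ici R) := by
    apply antitoneOn_of_deriv_nonpos (convex_Ici R) hd1.continuous.continuousOn
      hd1.differentiableOn
    intro x hx; rw [interior_Ici] at hx; exact hup x hx.le
  -- weighted monotone functions
  have hW1 : MonotoneOn (fun y => Real.exp (-ν*y) * (deriv φ₀ y + ν * φ₀ y)) (Set.Ici R) := by
    apply expWeight_monotoneOn (-ν) R (fun y => deriv φ₀ y + ν * φ₀ y) (fun y => deriv (deriv φ₀) y + ν * deriv φ₀ y)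
      (fun y => (hu' y).add ((hu y).const_mul ν))
    intro x hx
    nlinarith [hkey x hx]
  have hW2 : MonotoneOn (fun y => Real.exp (ν*y) * (deriv φ₀ y - ν * φ₀ y)) (Set.Ici R) := by
    apply expWeight_monotoneOn ν R (fun y => deriv φ₀ y - ν * φ₀ y) (fun y => deriv (deriv φ₀) y - ν * deriv φ₀ y)
      (fun y => (hu' y).sub ((hu y).const_mul ν))
    intro x hx
    nlinarith [hkey x hx]
  -- Step 3 : u' + ν u ≤ 0 on [R,∞)
  have hg : ∀ x ≥ R, deriv φ₀ x + ν * φ₀ x ≤ 0 := by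
    by_contra hcon
    push_neg at hcon
    obtain ⟨x₀, hx₀R, hx₀⟩ := hcon
    set ε := Real.exp (-ν*x₀) * (deriv φ₀ x₀ + ν * φ₀ x₀) with hεdef
    have hε : 0 < ε := mul_pos (Real.exp_pos _) hx₀
    have hbound : ∀ x ≥ x₀, ε * Real.exp (ν*x) ≤ ν * φ₀ R := by
      intro x hx
      have hxR : R ≤ x := le_trans hx₀R hx
      have h2 : ε ≤ Real.exp (-ν*x) * (deriv φ₀ x + ν * φ₀ x) :=
        hW1 (Set.mem_Ici.mpr hx₀R) (Set.mem_Ici.mpr hxR) hx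
      have h3 : deriv φ₀ x + ν * φ₀ x ≤ ν * φ₀ R := by
        have ha := hup x hxR
        have hb := hanti (Set.mem_Ici.mpr le_rfl) (Set.mem_Ici.mpr hxR) hxR
        nlinarith
      have h4 : Real.exp (-ν*x) * Real.exp (ν*x) = 1 := by
        rw [← Real.exp_add, neg_mul, neg_add_cancel, Real.exp_zero]
      calc ε * Real.exp (ν*x)
          ≤ (Real.exp (-ν*x) * (deriv φ₀ x + ν * φ₀ x)) * Real.exp (ν*x) :=
            mul_le_mul_of_nonneg_right h2 (Real.exp_pos _).le
        _ = (deriv φ₀ x + ν * φ₀ x) * (Real.exp (-ν*x) * Real.exp (ν*x)) := by ring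
        _ = deriv φ₀ x + ν * φ₀ x := by rw [h4, mul_one]
        _ ≤ ν * φ₀ R := h3
    have htend : Tendsto (fun x => ε * Real.exp (ν*x)) atTop atTop := by
      apply Tendsto.const_mul_atTop hε
      exact Real.tendsto_exp_atTop.comp (tendsto_id.const_mul_atTop hν)
    obtain ⟨x, hx1, hx2⟩ :=
      ((htend.eventually_gt_atTop (ν * φ₀ R)).and (eventually_ge_atTop x₀)).exists
    exact absurd (hbound x hx2) (not_le.mpr hx1)
  -- Step 4: decay of φ₀ on [R,∞)
  have hPhi : AntitoneOn (fun y => Real.exp (ν*y) * φ₀ y) (Set.Ici R) := by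
    apply expWeight_antitoneOn ν R φ₀ (deriv φ₀) hu
    intro x hx; exact hg x hx
  set C₁ := Real.exp (ν*R) * φ₀ R with hC₁def
  have hC₁ : 0 < C₁ := mul_pos (Real.exp_pos _) (hpos R)
  have hb0 : ∀ x ≥ R, φ₀ x ≤ C₁ * Real.exp (-ν*x) := by
    intro x hx
    have h2 : Real.exp (ν*x) * φ₀ x ≤ C₁ :=
      hPhi (Set.mem_Ici.mpr le_rfl) (Set.mem_Ici.mpr hx) hx
    have h4 : Real.exp (-ν*x) * Real.exp (ν*x) = 1 := by
      rw [← Real.exp_add, neg_mul, neg_add_cancel, Real.exp_zero]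
    calc φ₀ x = (Real.exp (-ν*x) * Real.exp (ν*x)) * φ₀ x := by rw [h4, one_mul]
      _ = Real.exp (-ν*x) * (Real.exp (ν*x) * φ₀ x) := by ring
      _ ≤ Real.exp (-ν*x) * C₁ := mul_le_mul_of_nonneg_left h2 (Real.exp_pos _).le
      _ = C₁ * Real.exp (-ν*x) := mul_comm _ _
  -- Step 5: bound on u'
  set K := Real.exp (ν*R) * (ν * φ₀ R - deriv φ₀ R) with hKdef
  have hK : 0 < K := by
    apply mul_pos (Real.exp_pos _)
    have h1 := hup R le_rfl
    have h2 := hpos R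
    nlinarith
  have hb1 : ∀ x ≥ R, |deriv φ₀ x| ≤ K * Real.exp (-ν*x) := by
    intro x hx
    have h1 := hW2 (Set.mem_Ici.mpr le_rfl) (Set.mem_Ici.mpr hx) hx
    have h2 : -K ≤ Real.exp (ν*x) * (deriv φ₀ x - ν * φ₀ x) := by
      have hKeq : -K = Real.exp (ν*R) * (deriv φ₀ R - ν * φ₀ R) := by rw [hKdef]; ring
      rw [hKeq]; exact h1
    have h4 : Real.exp (-ν*x) * Real.exp (ν*x) = 1 := by
      rw [← Real.exp_add, neg_mul, neg_add_cancel, Real.exp_zero]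
    have h5 : -K * Real.exp (-ν*x) ≤ deriv φ₀ x - ν * φ₀ x := by
      have h6 := mul_le_mul_of_nonneg_left h2 (Real.exp_pos (-ν*x)).le
      calc -K * Real.exp (-ν*x) = Real.exp (-ν*x) * (-K) := by ring
        _ ≤ Real.exp (-ν*x) * (Real.exp (ν*x) * (deriv φ₀ x - ν * φ₀ x)) := h6
        _ = (Real.exp (-ν*x) * Real.exp (ν*x)) * (deriv φ₀ x - ν * φ₀ x) := by ring
        _ = deriv φ₀ x - ν * φ₀ x := by rw [h4, one_mul]
    have h6 := hup x hx
    have h7 := hpos x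
    rw [abs_of_nonpos h6]
    nlinarith [mul_pos hν h7]
  -- Step 6: bound on u''
  set C₂ := (9/2 + μ₀^2) * C₁ with hC₂def
  have hb2 : ∀ x ≥ R, |deriv (deriv φ₀) x| ≤ C₂ * Real.exp (-ν*x) := by
    intro x hx
    rw [heq', abs_mul, abs_of_pos (hpos x)]
    have h1 : |Vpot x + μ₀^2| ≤ 9/2 + μ₀^2 := by
      have hV := Vpot_abs_le x
      rw [abs_le] at hV ⊢
      constructor <;> nlinarith
    have h2 := hb0 x hx
    have h3 := hpos x
    calc |Vpot x + μ₀^2| * φ₀ x ≤ (9/2+μ₀^2) * φ₀ x :=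
          mul_le_mul_of_nonneg_right h1 h3.le
      _ ≤ (9/2+μ₀^2) * (C₁ * Real.exp (-ν*x)) := by
          apply mul_le_mul_of_nonneg_left h2 (by positivity)
      _ = C₂ * Real.exp (-ν*x) := by rw [hC₂def]; ring
  -- compact bounds on [-R, R]
  obtain ⟨M0, hM0⟩ := (isCompact_Icc (a := -R) (b := R)).exists_bound_of_continuousOn
    hd1.continuous.continuousOn
  obtain ⟨M1, hM1⟩ := (isCompact_Icc (a := -R) (b := R)).exists_bound_of_continuousOn
    hd2.continuous.continuousOn
  obtain ⟨M2, hM2⟩ := (isCompact_Icc (a := -R) (b := R)).exists_bound_of_continuousOn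
    hcont2.continuousOn
  set M := max M0 (max M1 M2) with hMdef
  have hMnonneg : 0 ≤ M := by
    have h0 : (0:ℝ) ∈ Set.Icc (-R) R := by constructor <;> linarith
    have := hM0 0 h0
    have habs : (0:ℝ) ≤ ‖φ₀ 0‖ := norm_nonneg _
    have : (0:ℝ) ≤ M0 := le_trans habs this
    calc (0:ℝ) ≤ M0 := this
      _ ≤ M := le_max_left _ _
  -- final constant
  set C := max (max C₁ (max K C₂)) (M * Real.exp (ν*R)) + 1 with hCdef
  have hCb : max C₁ (max K C₂) ≤ C - 1 := by rw [hCdef]; simp [le_max_left]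
  have hCM : M * Real.exp (ν*R) ≤ C - 1 := by rw [hCdef]; simp [le_max_right]
  have hCC₁ : C₁ ≤ C := by have := le_max_left C₁ (max K C₂); linarith
  have hCK : K ≤ C := by
    have h1 := le_max_left K C₂
    have h2 := le_max_right C₁ (max K C₂)
    linarith
  have hCC₂ : C₂ ≤ C := by
    have h1 := le_max_right K C₂
    have h2 := le_max_right C₁ (max K C₂)
    linarith
  have hCpos : 0 < C := by linarith
  refine ⟨C, hCpos, ?_⟩
  have hexp : ∀ y:ℝ, Real.exp (-(Real.sqrt 2/2) * μ₀ * y) = Real.exp (-ν*y) := by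
    intro y; congr 1; rw [hνdef]; ring
  intro x
  rw [hexp]
  -- master bound for y ≥ R
  have hmaster : ∀ y ≥ R, |φ₀ y| ≤ C * Real.exp (-ν*y) ∧
      |deriv φ₀ y| ≤ C * Real.exp (-ν*y) ∧
      |deriv (deriv φ₀) y| ≤ C * Real.exp (-ν*y) := by
    intro y hy
    have hexpos := (Real.exp_pos (-ν*y)).le
    refine ⟨?_, ?_, ?_⟩
    · rw [abs_of_pos (hpos y)]
      calc φ₀ y ≤ C₁ * Real.exp (-ν*y) := hb0 y hy
        _ ≤ C * Real.exp (-ν*y) := mul_le_mul_of_nonneg_right hCC₁ hexpos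
    · calc |deriv φ₀ y| ≤ K * Real.exp (-ν*y) := hb1 y hy
        _ ≤ C * Real.exp (-ν*y) := mul_le_mul_of_nonneg_right hCK hexpos
    · calc |deriv (deriv φ₀) y| ≤ C₂ * Real.exp (-ν*y) := hb2 y hy
        _ ≤ C * Real.exp (-ν*y) := mul_le_mul_of_nonneg_right hCC₂ hexpos
  rcases le_or_gt R x with hx | hx
  · have habs : |x| = x := abs_of_nonneg (le_trans hRpos.le hx)
    rw [habs]
    exact hmaster x hx
  rcases le_or_gt x (-R) with hx2 | hx2
  · have habs : |x| = -x := abs_of_nonpos (by linarith)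
    have hyR : R ≤ -x := by linarith
    obtain ⟨m1, m2, m3⟩ := hmaster (-x) hyR
    rw [habs]
    refine ⟨?_, ?_, ?_⟩
    · rw [← heven x]
      simpa using m1
    · have : deriv φ₀ x = -(deriv φ₀ (-x)) := by
        have := hodd (-x)
        rw [neg_neg] at this
        linarith
      rw [this, abs_neg]
      exact m2
    · have : deriv (deriv φ₀) x = deriv (deriv φ₀) (-x) := by
        have := heven2 (-x)
        rw [neg_neg] at this
        exact this
      rw [this]
      exact m3
  · -- middle region
    have hmem : x ∈ Set.Icc (-R) R := ⟨by linarith, by linarith⟩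
    have habsR : |x| ≤ R := abs_le.mpr ⟨hmem.1, hmem.2⟩
    have e1 : (1:ℝ) ≤ Real.exp (ν*R) * Real.exp (-ν*|x|) := by
      rw [← Real.exp_add]
      apply Real.one_le_exp
      nlinarith
    have hMbound : M ≤ C * Real.exp (-ν*|x|) := by
      calc M = M * 1 := (mul_one M).symm
        _ ≤ M * (Real.exp (ν*R) * Real.exp (-ν*|x|)) :=
            mul_le_mul_of_nonneg_left e1 hMnonneg
        _ = (M * Real.exp (ν*R)) * Real.exp (-ν*|x|) := by ring
        _ ≤ C * Real.exp (-ν*|x|) := by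
            apply mul_le_mul_of_nonneg_right (by linarith) (Real.exp_pos _).le
    refine ⟨?_, ?_, ?_⟩
    · have := hM0 x hmem
      rw [Real.norm_eq_abs] at this
      calc |φ₀ x| ≤ M0 := this
        _ ≤ M := le_max_left _ _
        _ ≤ C * Real.exp (-ν*|x|) := hMbound
    · have := hM1 x hmem
      rw [Real.norm_eq_abs] at this
      calc |deriv φ₀ x| ≤ M1 := this
        _ ≤ M := le_trans (le_max_left _ _) (le_max_right _ _)
        _ ≤ C * Real.exp (-ν*|x|) := hMbound
    · have := hM2 x hmem
      rw [Real.norm_eq_abs] at this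
      calc |deriv (deriv φ₀) x| ≤ M2 := this
        _ ≤ M := le_trans (le_max_right _ _) (le_max_right _ _)
        _ ≤ C * Real.exp (-ν*|x|) := hMbound
end

section
/- The potential V has exactly one zero x₀ in (0,∞); its derivative V' has exactly one zero x₁ in (0,∞); its second derivative V'' has exactly two zeros x_{2,1} < x_{2,2} in (0,∞); and these satisfy the ordering 0 < x_{2,1} < x₀ < x₁ < x_{2,2}. Moreover the sign pattern holds: V ≤ 0 on [0,x₀] and V ≥ 0 on [x₀,∞); V' ≥ 0 on [0,x₁] and V' ≤ 0 on [x₁,∞); V'' ≥ 0 on [0,x_{2,1}], V'' ≤ 0 on [x_{2,1},x_{2,2}], and V'' ≥ 0 on [x_{2,2},∞). -/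
open Real MeasureTheory Filter

lemma alphaFn_hasDerivAt (x : ℝ) : HasDerivAt alphaFn ((Real.cosh x + 1)/3) x := by
  have h := ((Real.hasDerivAt_sinh x).add (hasDerivAt_id x)).const_mul (1/3 : ℝ)
  have he : alphaFn = fun y => 1/3 * (Real.sinh y + id y) := rfl
  rw [he]
  refine h.congr_deriv ?_
  simp; ring

lemma alphaInv_surjective : Function.Surjective alphaInv :=
  fun y => ⟨alphaFn y, alphaInv_alphaFn y⟩

lemma alphaInv_continuous : Continuous alphaInv :=
  alphaInv_strictMono.monotone.continuous_of_surjective alphaInv_surjective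

lemma alphaInv_hasDerivAt (x : ℝ) :
    HasDerivAt alphaInv (3/(Real.cosh (alphaInv x) + 1)) x := by
  have hne : (Real.cosh (alphaInv x) + 1)/3 ≠ 0 := by
    have := Real.cosh_pos (alphaInv x); positivity
  have h := HasDerivAt.of_local_left_inverse alphaInv_continuous.continuousAt
    (alphaFn_hasDerivAt (alphaInv x)) hne
    (Filter.Eventually.of_forall alphaFn_alphaInv)
  refine h.congr_deriv ?_
  rw [inv_div]

lemma alphaInv_zero : alphaInv 0 = 0 := by
  have h0 : alphaFn 0 = 0 := by simp [alphaFn]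
  conv_lhs => rw [← h0]
  exact alphaInv_alphaFn 0

lemma alphaInv_nonneg {x : ℝ} (hx : 0 ≤ x) : 0 ≤ alphaInv x := by
  have := alphaInv_strictMono.monotone hx
  rwa [alphaInv_zero] at this

lemma alphaInv_pos {x : ℝ} (hx : 0 < x) : 0 < alphaInv x := by
  have := alphaInv_strictMono hx
  rwa [alphaInv_zero] at this

lemma cosh_half (y : ℝ) : Real.cosh y = 2 * Real.cosh (y/2)^2 - 1 := by
  have : y = 2 * (y/2) := by ring
  rw [this, Real.cosh_two_mul, Real.sinh_sq]
  ring_nf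

lemma Vpot_formula (x : ℝ) :
    Vpot x = 18 * (Real.cosh (alphaInv x) - 2) / (Real.cosh (alphaInv x) + 1)^3 := by
  set y := alphaInv x
  have hc : Real.cosh (y/2) ≠ 0 := (Real.cosh_pos _).ne'
  rw [cosh_half y]
  simp only [Vpot, Qt, Qs]
  field_simp
  ring

lemma G1_hasDerivAt (y : ℝ) :
    HasDerivAt (fun y => 18 * (Real.cosh y - 2) / (Real.cosh y + 1)^3)
      (18 * (7 - 2*Real.cosh y) * Real.sinh y / (Real.cosh y + 1)^4) y := by
  have hpos : (0:ℝ) < Real.cosh y + 1 := by have := Real.cosh_pos y; linarith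
  have h1 : HasDerivAt (fun y => 18 * (Real.cosh y - 2)) (18 * Real.sinh y) y := by
    simpa using (((Real.hasDerivAt_cosh y).sub_const 2).const_mul (18:ℝ))
  have h2 : HasDerivAt (fun y => (Real.cosh y + 1)^3)
      (3 * (Real.cosh y + 1)^2 * Real.sinh y) y := by
    have := ((Real.hasDerivAt_cosh y).add_const 1).pow 3
    exact this.congr_deriv (by norm_num)
  have h := h1.div h2 (by positivity)
  refine h.congr_deriv ?_
  field_simp
  ring

lemma Vpot_hasDerivAt (x : ℝ) :
    HasDerivAt Vpot
      (54 * (7 - 2*Real.cosh (alphaInv x)) * Real.sinh (alphaInv x)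
        / (Real.cosh (alphaInv x) + 1)^5) x := by
  have hpos : (0:ℝ) < Real.cosh (alphaInv x) + 1 := by
    have := Real.cosh_pos (alphaInv x); linarith
  have h := (G1_hasDerivAt (alphaInv x)).comp x (alphaInv_hasDerivAt x)
  have he : Vpot = (fun y => 18 * (Real.cosh y - 2) / (Real.cosh y + 1)^3) ∘ alphaInv := by
    funext z; exact Vpot_formula z
  rw [he]
  refine h.congr_deriv ?_
  field_simp
  ring

lemma deriv_Vpot (x : ℝ) : deriv Vpot x =
    54 * (7 - 2*Real.cosh (alphaInv x)) * Real.sinh (alphaInv x)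
      / (Real.cosh (alphaInv x) + 1)^5 := (Vpot_hasDerivAt x).deriv

lemma G2_hasDerivAt (y : ℝ) :
    HasDerivAt (fun y => 54 * (7 - 2*Real.cosh y) * Real.sinh y / (Real.cosh y + 1)^5)
      (54 * (Real.cosh y + 1) * (6*Real.cosh y^2 - 38*Real.cosh y + 37)
        / (Real.cosh y + 1)^6) y := by
  have hpos : (0:ℝ) < Real.cosh y + 1 := by have := Real.cosh_pos y; linarith
  have h1 : HasDerivAt (fun y => 54 * (7 - 2*Real.cosh y) * Real.sinh y)
      (54 * ((-2*Real.sinh y) * Real.sinh y + (7 - 2*Real.cosh y) * Real.cosh y)) y := by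
    have ha : HasDerivAt (fun y => (7:ℝ) - 2*Real.cosh y) (-2*Real.sinh y) y := by
      simpa using ((Real.hasDerivAt_cosh y).const_mul (2:ℝ)).const_sub 7
    have h := (ha.mul (Real.hasDerivAt_sinh y)).const_mul (54:ℝ)
    have hfe : (fun y => 54 * (7 - 2*Real.cosh y) * Real.sinh y)
        = (fun y => 54 * ((7 - 2*Real.cosh y) * Real.sinh y)) := by funext z; ring
    rw [hfe]
    exact h
  have h2 : HasDerivAt (fun y => (Real.cosh y + 1)^5)
      (5 * (Real.cosh y + 1)^4 * Real.sinh y) y := by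
    have := ((Real.hasDerivAt_cosh y).add_const 1).pow 5
    exact this.congr_deriv (by norm_num)
  have h := h1.div h2 (by positivity)
  have hs : Real.sinh y * Real.sinh y = Real.cosh y ^ 2 - 1 := by
    have := Real.sinh_sq y; nlinarith
  refine h.congr_deriv ?_
  rw [div_eq_div_iff (by positivity) (by positivity)]
  linear_combination (-(54*(Real.cosh y+1)^10*(37-8*Real.cosh y))) * hs

lemma deriv_deriv_Vpot (x : ℝ) : deriv (deriv Vpot) x =
    162 * (6*Real.cosh (alphaInv x)^2 - 38*Real.cosh (alphaInv x) + 37)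
      / (Real.cosh (alphaInv x) + 1)^6 := by
  have hpos : (0:ℝ) < Real.cosh (alphaInv x) + 1 := by
    have := Real.cosh_pos (alphaInv x); linarith
  have he : deriv Vpot = (fun y => 54 * (7 - 2*Real.cosh y) * Real.sinh y
      / (Real.cosh y + 1)^5) ∘ alphaInv := by
    funext z; exact deriv_Vpot z
  rw [he]
  have h := (G2_hasDerivAt (alphaInv x)).comp x (alphaInv_hasDerivAt x)
  rw [h.deriv]
  field_simp
  ring

noncomputable def yroot (a : ℝ) : ℝ := Real.arsinh (Real.sqrt (a^2 - 1))

lemma cosh_yroot {a : ℝ} (ha : 1 ≤ a) : Real.cosh (yroot a) = a := by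
  rw [yroot, Real.cosh_arsinh, Real.sq_sqrt (by nlinarith)]
  rw [show (1 + (a^2-1)) = a^2 by ring, Real.sqrt_sq (by linarith)]

lemma yroot_nonneg (a : ℝ) : 0 ≤ yroot a :=
  Real.arsinh_nonneg_iff.mpr (Real.sqrt_nonneg _)

lemma yroot_pos {a : ℝ} (ha : 1 < a) : 0 < yroot a :=
  Real.arsinh_pos_iff.mpr (Real.sqrt_pos.mpr (by nlinarith))

lemma xroot_pos {a : ℝ} (ha : 1 < a) : 0 < alphaFn (yroot a) := by
  have h0 : alphaFn 0 = 0 := by simp [alphaFn]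
  have := alphaFn_strictMono (yroot_pos ha)
  rwa [h0] at this

lemma xroot_lt_xroot {a b : ℝ} (ha : 1 ≤ a) (hab : a < b) :
    alphaFn (yroot a) < alphaFn (yroot b) := by
  apply alphaFn_strictMono
  apply Real.arsinh_strictMono
  apply Real.sqrt_lt_sqrt (by nlinarith)
  nlinarith

lemma cosh_alphaInv_eq_iff {x a : ℝ} (hx : 0 < x) (ha : 1 ≤ a) :
    Real.cosh (alphaInv x) = a ↔ x = alphaFn (yroot a) := by
  constructor
  · intro h
    have h2 : Real.cosh (alphaInv x) = Real.cosh (yroot a) := by rw [h, cosh_yroot ha]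
    have h3 : alphaInv x = yroot a :=
      Real.cosh_strictMonoOn.injOn (Set.mem_Ici.mpr (alphaInv_pos hx).le)
        (Set.mem_Ici.mpr (yroot_nonneg a)) h2
    rw [← alphaFn_alphaInv x, h3]
  · intro h
    rw [h, alphaInv_alphaFn, cosh_yroot ha]

lemma cosh_alphaInv_le {x a : ℝ} (hx : 0 ≤ x) (ha : 1 ≤ a)
    (h : x ≤ alphaFn (yroot a)) : Real.cosh (alphaInv x) ≤ a := by
  have h1 : alphaInv x ≤ yroot a := by
    have := alphaInv_strictMono.monotone h
    rwa [alphaInv_alphaFn] at this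
  calc Real.cosh (alphaInv x) ≤ Real.cosh (yroot a) := by
        rw [Real.cosh_le_cosh, abs_of_nonneg (alphaInv_nonneg hx),
          abs_of_nonneg (yroot_nonneg a)]
        exact h1
    _ = a := cosh_yroot ha

lemma le_cosh_alphaInv {x a : ℝ} (ha : 1 ≤ a)
    (h : alphaFn (yroot a) ≤ x) : a ≤ Real.cosh (alphaInv x) := by
  have h1 : yroot a ≤ alphaInv x := by
    have := alphaInv_strictMono.monotone h
    rwa [alphaInv_alphaFn] at this
  calc a = Real.cosh (yroot a) := (cosh_yroot ha).symm
    _ ≤ Real.cosh (alphaInv x) := by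
        rw [Real.cosh_le_cosh, abs_of_nonneg (yroot_nonneg a),
          abs_of_nonneg ((yroot_nonneg a).trans h1)]
        exact h1

/-- Structure of the zeros of `V`, `V'`, `V''` on `(0,∞)` and the
resulting sign pattern. -/
theorem potential_roots_and_signs :
    ∃ x0 x1 x21 x22 : ℝ,
      0 < x21 ∧ x21 < x0 ∧ x0 < x1 ∧ x1 < x22 ∧
      (∀ x ∈ Set.Ioi (0:ℝ), (Vpot x = 0 ↔ x = x0)) ∧
      (∀ x ∈ Set.Ioi (0:ℝ), (deriv Vpot x = 0 ↔ x = x1)) ∧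
      (∀ x ∈ Set.Ioi (0:ℝ), (deriv (deriv Vpot) x = 0 ↔ x = x21 ∨ x = x22)) ∧
      (∀ x : ℝ, 0 ≤ x → x ≤ x0 → Vpot x ≤ 0) ∧
      (∀ x : ℝ, x0 ≤ x → 0 ≤ Vpot x) ∧
      (∀ x : ℝ, 0 ≤ x → x ≤ x1 → 0 ≤ deriv Vpot x) ∧
      (∀ x : ℝ, x1 ≤ x → deriv Vpot x ≤ 0) ∧
      (∀ x : ℝ, 0 ≤ x → x ≤ x21 → 0 ≤ deriv (deriv Vpot) x) ∧
      (∀ x : ℝ, x21 ≤ x → x ≤ x22 → deriv (deriv Vpot) x ≤ 0) ∧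
      (∀ x : ℝ, x22 ≤ x → 0 ≤ deriv (deriv Vpot) x) := by
  have h139 : Real.sqrt 139 ^ 2 = 139 := Real.sq_sqrt (by norm_num)
  have h11 : (11:ℝ) < Real.sqrt 139 := by
    rw [show (11:ℝ) = Real.sqrt 121 by rw [show (121:ℝ) = 11^2 by norm_num,
      Real.sqrt_sq (by norm_num)]]
    exact Real.sqrt_lt_sqrt (by norm_num) (by norm_num)
  have h12 : Real.sqrt 139 < 12 := by
    nlinarith [Real.sqrt_nonneg (139:ℝ)]
  set r1 : ℝ := (19 - Real.sqrt 139)/6 with hr1def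
  set r2 : ℝ := (19 + Real.sqrt 139)/6 with hr2def
  have hr1a : (1:ℝ) < r1 := by rw [hr1def]; nlinarith
  have hr1b : r1 < 2 := by rw [hr1def]; nlinarith
  have hr2a : (7/2:ℝ) < r2 := by rw [hr2def]; nlinarith
  have hr12 : r1 < r2 := by rw [hr1def, hr2def]; nlinarith
  have qfact : ∀ v : ℝ, 6*v^2 - 38*v + 37 = 6*(v - r1)*(v - r2) := by
    intro v
    rw [hr1def, hr2def]
    linear_combination (1/6 : ℝ) * h139
  refine ⟨alphaFn (yroot 2), alphaFn (yroot (7/2)), alphaFn (yroot r1), alphaFn (yroot r2),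
    xroot_pos hr1a, xroot_lt_xroot hr1a.le hr1b, xroot_lt_xroot (by norm_num) (by norm_num),
    xroot_lt_xroot (by norm_num) hr2a, ?_, ?_, ?_, ?_, ?_, ?_, ?_, ?_, ?_, ?_⟩
  · -- Vpot zero iff
    intro x hx
    rw [Set.mem_Ioi] at hx
    rw [Vpot_formula]
    have hpos : (0:ℝ) < Real.cosh (alphaInv x) + 1 := by
      have := Real.cosh_pos (alphaInv x); linarith
    rw [div_eq_zero_iff]
    rw [← cosh_alphaInv_eq_iff hx (by norm_num : (1:ℝ) ≤ 2)]
    constructor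
    · rintro (h | h)
      · nlinarith
      · exact absurd h (by positivity)
    · intro h; left; rw [h]; ring
  · -- deriv Vpot zero iff
    intro x hx
    rw [Set.mem_Ioi] at hx
    rw [deriv_Vpot]
    have hpos : (0:ℝ) < Real.cosh (alphaInv x) + 1 := by
      have := Real.cosh_pos (alphaInv x); linarith
    have hs : 0 < Real.sinh (alphaInv x) := Real.sinh_pos_iff.mpr (alphaInv_pos hx)
    rw [div_eq_zero_iff]
    rw [← cosh_alphaInv_eq_iff hx (by norm_num : (1:ℝ) ≤ 7/2)]
    constructor
    · rintro (h | h)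
      · rcases mul_eq_zero.mp h with h' | h'
        · nlinarith
        · exact absurd h' hs.ne'
      · exact absurd h (by positivity)
    · intro h; left; rw [h]; ring
  · -- second deriv zero iff
    intro x hx
    rw [Set.mem_Ioi] at hx
    rw [deriv_deriv_Vpot]
    have hpos : (0:ℝ) < Real.cosh (alphaInv x) + 1 := by
      have := Real.cosh_pos (alphaInv x); linarith
    rw [div_eq_zero_iff]
    rw [← cosh_alphaInv_eq_iff hx hr1a.le, ← cosh_alphaInv_eq_iff hx (by linarith : (1:ℝ) ≤ r2)]
    set v := Real.cosh (alphaInv x)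
    constructor
    · rintro (h | h)
      · have h' : 6*v^2 - 38*v + 37 = 0 := by nlinarith
        rw [qfact v] at h'
        rcases mul_eq_zero.mp h' with h'' | h''
        · rcases mul_eq_zero.mp h'' with h3 | h3
          · norm_num at h3
          · left; linarith [sub_eq_zero.mp h3]
        · right; linarith [sub_eq_zero.mp h'']
      · exact absurd h (by positivity)
    · rintro (h | h) <;> [skip; skip] <;>
        (left; rw [h, qfact]; ring)
  · -- Vpot ≤ 0 on [0, x0]
    intro x hx0 hx1
    rw [Vpot_formula]
    have hv := cosh_alphaInv_le hx0 (by norm_num : (1:ℝ) ≤ 2) hx1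
    have hpos : (0:ℝ) < Real.cosh (alphaInv x) + 1 := by
      have := Real.cosh_pos (alphaInv x); linarith
    apply div_nonpos_of_nonpos_of_nonneg
    · nlinarith
    · positivity
  · -- Vpot ≥ 0 on [x0, ∞)
    intro x hx0
    rw [Vpot_formula]
    have hv := le_cosh_alphaInv (by norm_num : (1:ℝ) ≤ 2) hx0
    have hpos : (0:ℝ) < Real.cosh (alphaInv x) + 1 := by
      have := Real.cosh_pos (alphaInv x); linarith
    apply div_nonneg
    · nlinarith
    · positivity
  · -- deriv ≥ 0 on [0, x1]
    intro x hx0 hx1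
    rw [deriv_Vpot]
    have hv := cosh_alphaInv_le hx0 (by norm_num : (1:ℝ) ≤ 7/2) hx1
    have hs : 0 ≤ Real.sinh (alphaInv x) := Real.sinh_nonneg_iff.mpr (alphaInv_nonneg hx0)
    have hpos : (0:ℝ) < Real.cosh (alphaInv x) + 1 := by
      have := Real.cosh_pos (alphaInv x); linarith
    apply div_nonneg
    · have : 0 ≤ 54 * (7 - 2*Real.cosh (alphaInv x)) := by nlinarith
      exact mul_nonneg this hs
    · positivity
  · -- deriv ≤ 0 on [x1, ∞)
    intro x hx0
    rw [deriv_Vpot]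
    have hxpos : (0:ℝ) ≤ x := le_trans (xroot_pos (by norm_num : (1:ℝ) < 7/2)).le hx0
    have hv := le_cosh_alphaInv (by norm_num : (1:ℝ) ≤ 7/2) hx0
    have hs : 0 ≤ Real.sinh (alphaInv x) := Real.sinh_nonneg_iff.mpr (alphaInv_nonneg hxpos)
    have hpos : (0:ℝ) < Real.cosh (alphaInv x) + 1 := by
      have := Real.cosh_pos (alphaInv x); linarith
    apply div_nonpos_of_nonpos_of_nonneg
    · have : 54 * (7 - 2*Real.cosh (alphaInv x)) ≤ 0 := by nlinarith
      exact mul_nonpos_of_nonpos_of_nonneg this hs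
    · positivity
  · -- second deriv ≥ 0 on [0, x21]
    intro x hx0 hx1
    rw [deriv_deriv_Vpot]
    have hv := cosh_alphaInv_le hx0 hr1a.le hx1
    have hpos : (0:ℝ) < Real.cosh (alphaInv x) + 1 := by
      have := Real.cosh_pos (alphaInv x); linarith
    apply div_nonneg
    · rw [show (6*Real.cosh (alphaInv x)^2 - 38*Real.cosh (alphaInv x) + 37)
        = 6*(Real.cosh (alphaInv x) - r1)*(Real.cosh (alphaInv x) - r2) from qfact _]
      nlinarith
    · positivity
  · -- second deriv ≤ 0 on [x21, x22]
    intro x hx0 hx1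
    rw [deriv_deriv_Vpot]
    have hxpos : (0:ℝ) ≤ x := le_trans (xroot_pos hr1a).le hx0
    have hv1 := le_cosh_alphaInv hr1a.le hx0
    have hv2 := cosh_alphaInv_le hxpos (by linarith : (1:ℝ) ≤ r2) hx1
    have hpos : (0:ℝ) < Real.cosh (alphaInv x) + 1 := by
      have := Real.cosh_pos (alphaInv x); linarith
    apply div_nonpos_of_nonpos_of_nonneg
    · rw [show (6*Real.cosh (alphaInv x)^2 - 38*Real.cosh (alphaInv x) + 37)
        = 6*(Real.cosh (alphaInv x) - r1)*(Real.cosh (alphaInv x) - r2) from qfact _]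
      nlinarith
    · positivity
  · -- second deriv ≥ 0 on [x22, ∞)
    intro x hx0
    rw [deriv_deriv_Vpot]
    have hv := le_cosh_alphaInv (by linarith : (1:ℝ) ≤ r2) hx0
    have hpos : (0:ℝ) < Real.cosh (alphaInv x) + 1 := by
      have := Real.cosh_pos (alphaInv x); linarith
    apply div_nonneg
    · rw [show (6*Real.cosh (alphaInv x)^2 - 38*Real.cosh (alphaInv x) + 37)
        = 6*(Real.cosh (alphaInv x) - r1)*(Real.cosh (alphaInv x) - r2) from qfact _]
      nlinarith
    · positivity
end
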